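/- Let d ≥ 1, 1 ≤ p ≤ ∞, I ⊂ ℝ a compact interval, r ≥ 0, f ∈ L^∞(I, L²(ℝ^d;ℂ)), and g ∈ L^∞(I, L²(ℝ^d;ℂ)) such that for some s ∈ I the function x ↦ |x|^r g(s,x) belongs to L²(ℝ^d). Then for every V ∈ M^p(I): ‖ |x|^r (L_I(f,g)V)(s, ·) ‖_{L¹(ℝ^d)} ≤ |I|^{1−1/p} ‖ |x|^r g(s) ‖_{L²} ‖f‖_{L^∞(I,L²)} ‖V‖_{M^p(I)}, where |I| denotes the length of I; i.e. at each time s the output of L_I(f,g) inherits the spatial moment bounds of g(s). -/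

import Mathlib

open MeasureTheory Real Set
open scoped ENNReal ComplexConjugate

noncomputable section

abbrev Rd (d : ℕ) := EuclideanSpace ℝ (Fin d)
abbrev Ltwo (d : ℕ) := MeasureTheory.Lp ℂ 2 (volume : MeasureTheory.Measure (Rd d))
abbrev LoneR (d : ℕ) := MeasureTheory.Lp ℝ 1 (volume : MeasureTheory.Measure (Rd d))
abbrev LoneC (d : ℕ) := MeasureTheory.Lp ℂ 1 (volume : MeasureTheory.Measure (Rd d))
abbrev timeMeasure (a b : ℝ) : MeasureTheory.Measure ℝ := volume.restrict (Set.Icc a b)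

/-- `M^p([a,b])`: the dual of the Bochner space `L^{p'}([a,b], L¹(ℝ^d;ℝ))`,
where `q = p'` is the conjugate exponent of `p`. -/
abbrev Mp (d : ℕ) (q : ℝ≥0∞) [Fact (1 ≤ q)] (a b : ℝ) :=
  StrongDual ℝ (MeasureTheory.Lp (LoneR d) q (timeMeasure a b))

/-- `U` is the free Schrödinger group `t ↦ e^{itΔ}` on `L²(ℝ^d;ℂ)`: it is characterized as
the family of unitaries acting on (L²-classes of) Schwartz functions as the Fourier multiplier
with symbol `e^{-it|ξ|²}` (in Mathlib's `2π`-convention for the Fourier transform, the symbol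
reads `e^{-4π²it‖ξ‖²}`). -/
def IsSchrodingerGroup (d : ℕ) (U : ℝ → (Ltwo d ≃ₗᵢ[ℂ] Ltwo d)) : Prop :=
  ∀ (t : ℝ) (φ ψ : SchwartzMap (Rd d) ℂ),
    (∀ ξ : Rd d, FourierTransform.fourierCLE ℂ (SchwartzMap (Rd d) ℂ) ψ ξ
        = Complex.exp (-Complex.I * (t : ℂ) * ((4 * π ^ 2 * ‖ξ‖ ^ 2 : ℝ) : ℂ))
          * FourierTransform.fourierCLE ℂ (SchwartzMap (Rd d) ℂ) φ ξ) →
    ∀ (u v : Ltwo d), (⇑u =ᵐ[volume] ⇑φ) → (⇑v =ᵐ[volume] ⇑ψ) → U t u = v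

/-- `w = ∫_J f(s) V(ds)`, defined by duality:
`⟪g, w⟫ = ⟨V, s ↦ 1_J(s) · conj(g)·f(s)⟩` for every `g ∈ L²`, the (real) functional `V`
being applied separately to the real and imaginary parts. -/
def IsDualityIntegralOn (d : ℕ) (q : ℝ≥0∞) [Fact (1 ≤ q)] (a b : ℝ)
    (V : Mp d q a b) (J : Set ℝ) (f : ℝ → Ltwo d) (w : Ltwo d) : Prop :=
  ∀ g : Ltwo d, ∃ Fre Fim : MeasureTheory.Lp (LoneR d) q (timeMeasure a b),
    (∀ᵐ s ∂(timeMeasure a b), ⇑(Fre s)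
        =ᵐ[volume] fun x => J.indicator
          (fun s' => ((starRingEnd ℂ) (g x) * (f s' : Rd d → ℂ) x).re) s) ∧
    (∀ᵐ s ∂(timeMeasure a b), ⇑(Fim s)
        =ᵐ[volume] fun x => J.indicator
          (fun s' => ((starRingEnd ℂ) (g x) * (f s' : Rd d → ℂ) x).im) s) ∧
    (inner ℂ g w : ℂ) = ((V Fre : ℝ) : ℂ) + Complex.I * ((V Fim : ℝ) : ℂ)

/-- `ψ` is a mild solution of the Schrödinger equation with potential `V ∈ M^p([a,b])`
and initial condition `ψ₀`:  `ψ(t) = e^{itΔ}ψ₀ + ∫₀ᵗ e^{i(t-s)Δ} ψ(s) V(ds)` for all `t`,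
the integral being understood by duality and oriented (`∫₀ᵗ = -∫ₜ⁰` for `t < 0`). -/
def IsMildSolution (d : ℕ) (U : ℝ → (Ltwo d ≃ₗᵢ[ℂ] Ltwo d)) (q : ℝ≥0∞) [Fact (1 ≤ q)]
    (a b : ℝ) (hab : a ≤ b) (V : Mp d q a b) (ψ₀ : Ltwo d)
    (ψ : C(Set.Icc a b, Ltwo d)) : Prop :=
  ∀ t : Set.Icc a b, ∃ w : Ltwo d,
    IsDualityIntegralOn d q a b V (Set.uIcc 0 (t : ℝ))
      (fun s => U ((t : ℝ) - s) (Set.IccExtend hab ψ s)) w ∧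
    ψ t = U (t : ℝ) ψ₀ + (if (0:ℝ) ≤ (t : ℝ) then (1 : ℂ) else -1) • w

/-- `F = L_I(f,g) V`, i.e. `F(s) = conj(g(s)) · ∫_I e^{i(s-s')Δ} f(s') V(ds')` for a.e. `s ∈ I`,
`I = [a,b]`. -/
def IsLopValue (d : ℕ) (U : ℝ → (Ltwo d ≃ₗᵢ[ℂ] Ltwo d)) (q : ℝ≥0∞) [Fact (1 ≤ q)]
    (a b : ℝ) (f g : ℝ → Ltwo d) (V : Mp d q a b)
    (F : MeasureTheory.Lp (LoneC d) q (timeMeasure a b)) : Prop :=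
  ∀ᵐ s ∂(timeMeasure a b), ∃ w : Ltwo d,
    IsDualityIntegralOn d q a b V (Set.Icc a b) (fun s' => U (s - s') (f s')) w ∧
    ⇑(F s) =ᵐ[volume]
      fun x => (starRingEnd ℂ) ((g s : Rd d → ℂ) x) * (w : Rd d → ℂ) x

/-- The squared modulus `|u|² ∈ L¹(ℝ^d;ℝ)` of `u ∈ L²(ℝ^d;ℂ)`. -/
def sqModulus (d : ℕ) (u : Ltwo d) : LoneR d :=
  MeasureTheory.MemLp.toLp _
    ((MeasureTheory.Lp.memLp u).norm_rpow (by norm_num) (by norm_num))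

/-- A potential in `M^p_loc(ℝ)`: a compatible family of elements of `M^p(I)` for all compact
intervals `I = [a,b]`, i.e. the functional on a larger interval agrees with the one on a smaller
interval when applied to (test functions vanishing outside the smaller interval). -/
structure MlocFamily (d : ℕ) (q : ℝ≥0∞) [Fact (1 ≤ q)] where
  toFun : ∀ a b : ℝ, Mp d q a b
  compat : ∀ (a b a' b' : ℝ), a' ≤ a → b ≤ b' →
    ∀ (F : MeasureTheory.Lp (LoneR d) q (timeMeasure a b))
      (F' : MeasureTheory.Lp (LoneR d) q (timeMeasure a' b')),
      (∀ᵐ s ∂(volume : MeasureTheory.Measure ℝ),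
          (s ∈ Set.Icc a b → F s = F' s) ∧
          (s ∈ Set.Icc a' b' ∧ s ∉ Set.Icc a b → F' s = 0)) →
      toFun a b F = toFun a' b' F'


/-- L² elements have `eLpNorm = ofReal` of their norm. -/
lemma elpnorm_eq_ofReal_norm {d : ℕ} (u : Ltwo d) :
    MeasureTheory.eLpNorm (⇑u) 2 (volume : MeasureTheory.Measure (Rd d))
      = ENNReal.ofReal ‖u‖ := by
  rw [MeasureTheory.Lp.norm_def, ENNReal.ofReal_toReal (MeasureTheory.Lp.eLpNorm_ne_top u)]

/-- L¹ bound of product of two L² functions (Cauchy–Schwarz / Hölder). -/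
lemma l1_le_l2_mul_l2 {d : ℕ} {φ ψ : Rd d → ℂ}
    (hφ : MeasureTheory.AEStronglyMeasurable φ (volume : MeasureTheory.Measure (Rd d)))
    (hψ : MeasureTheory.AEStronglyMeasurable ψ (volume : MeasureTheory.Measure (Rd d))) :
    MeasureTheory.eLpNorm (fun x => (starRingEnd ℂ) (φ x) * ψ x) 1
        (volume : MeasureTheory.Measure (Rd d))
      ≤ MeasureTheory.eLpNorm φ 2 volume * MeasureTheory.eLpNorm ψ 2 volume := by
  refine MeasureTheory.eLpNorm_le_eLpNorm_mul_eLpNorm'_of_norm (p := 2) (q := 2) hφ hψ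
    (fun u v => (starRingEnd ℂ) u * v) 1 ?_
    (hpqr := ⟨by rw [inv_one]; exact ENNReal.inv_two_add_inv_two⟩) |>.trans_eq (by simp)
  filter_upwards with x
  rw [norm_mul, RCLike.norm_conj, NNReal.coe_one, one_mul]

set_option maxHeartbeats 1000000 in
set_option synthInstance.maxHeartbeats 400000 in
/-- Pointwise-in-time moment bound: for a.e.-defined
`(L_I(f,g)V)(s) = conj(g(s))·∫_I e^{i(s-s')Δ} f(s') V(ds')` one has
`‖ |x|^r (L_I(f,g)V)(s,·) ‖_{L¹} ≤ |I|^{1-1/p} ‖|x|^r g(s)‖_{L²} ‖f‖_{L^∞L²} ‖V‖_{M^p}`. -/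
theorem statement17 (d : ℕ) (hd : 1 ≤ d)
    (p q : ℝ≥0∞) (hp : 1 ≤ p) (hpq : 1 / p + 1 / q = 1) [Fact (1 ≤ q)]
    (a b : ℝ) (hab : a ≤ b)
    (U : ℝ → (Ltwo d ≃ₗᵢ[ℂ] Ltwo d)) (hU : IsSchrodingerGroup d U)
    (r : ℝ) (hr : 0 ≤ r)
    (f g : MeasureTheory.Lp (Ltwo d) ∞ (timeMeasure a b))
    (s : ℝ) (hs : s ∈ Set.Icc a b)
    (hg : MeasureTheory.MemLp (fun x : Rd d => ‖x‖ ^ r • ((g s : Rd d → ℂ) x)) 2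
      (volume : MeasureTheory.Measure (Rd d)))
    (V : Mp d q a b) (w : Ltwo d)
    (hw : IsDualityIntegralOn d q a b V (Set.Icc a b) (fun s' => U (s - s') (f s')) w) :
    MeasureTheory.eLpNorm
        (fun x : Rd d => ‖x‖ ^ r •
          ((starRingEnd ℂ) ((g s : Rd d → ℂ) x) * (w : Rd d → ℂ) x)) 1
        (volume : MeasureTheory.Measure (Rd d))
      ≤ ENNReal.ofReal ((b - a) ^ (1 - 1 / p.toReal) *
          (MeasureTheory.eLpNorm (fun x : Rd d => ‖x‖ ^ r • ((g s : Rd d → ℂ) x)) 2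
            (volume : MeasureTheory.Measure (Rd d))).toReal * ‖f‖ * ‖V‖) := by
  classical
  set G : Rd d → ℂ := fun x => ‖x‖ ^ r • ((g s : Rd d → ℂ) x) with hG
  have hGmeas : MeasureTheory.AEStronglyMeasurable G volume := hg.1
  have hwmeas : MeasureTheory.AEStronglyMeasurable (⇑w) volume :=
    (MeasureTheory.Lp.memLp w).aestronglyMeasurable
  -- Step 1: Cauchy-Schwarz for the left-hand side
  have hfun : (fun x : Rd d => ‖x‖ ^ r •
        ((starRingEnd ℂ) ((g s : Rd d → ℂ) x) * (w : Rd d → ℂ) x))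
      = fun x => (starRingEnd ℂ) (G x) * (w : Rd d → ℂ) x := by
    funext x
    simp only [hG, Complex.real_smul, map_mul, Complex.conj_ofReal]
    ring
  have step1 : MeasureTheory.eLpNorm
      (fun x : Rd d => ‖x‖ ^ r •
        ((starRingEnd ℂ) ((g s : Rd d → ℂ) x) * (w : Rd d → ℂ) x)) 1 volume
      ≤ MeasureTheory.eLpNorm G 2 volume * ENNReal.ofReal ‖w‖ := by
    rw [hfun, ← elpnorm_eq_ofReal_norm w]
    exact l1_le_l2_mul_l2 hGmeas hwmeas
  -- exponent bookkeeping
  have hq1 : (1:ℝ≥0∞) ≤ q := Fact.out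
  have hexp : q.toReal⁻¹ = 1 - 1 / p.toReal := by
    by_cases hptop : p = ∞
    · have hq : q = 1 := by
        rw [hptop] at hpq
        simp only [one_div, ENNReal.inv_top, zero_add] at hpq
        simpa using congrArg (·⁻¹) hpq
      simp [hq, hptop]
    · by_cases hqtop : q = ∞
      · have hp1 : p = 1 := by
          rw [hqtop] at hpq
          simp only [one_div, ENNReal.inv_top, add_zero] at hpq
          simpa using congrArg (·⁻¹) hpq
        simp [hp1, hqtop]
      · have hp0 : p ≠ 0 := by
          intro h; rw [h] at hp; simp at hp
        have hq0 : q ≠ 0 := by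
          intro h; rw [h] at hq1; simp at hq1
        have := congrArg ENNReal.toReal hpq
        rw [ENNReal.toReal_add (by simp [ENNReal.div_eq_top, hptop, hp0])
          (by simp [ENNReal.div_eq_top, hqtop, hq0])] at this
        simp only [ENNReal.toReal_div, ENNReal.toReal_one] at this
        have hpt : p.toReal ≠ 0 := ENNReal.toReal_ne_zero.mpr ⟨hp0, hptop⟩
        field_simp at this ⊢
        linarith
  -- Step 2: bound ‖w‖ via duality, testing against w itself
  have hwnorm : ‖w‖ ≤ (b - a) ^ (1 - 1 / p.toReal) * ‖f‖ * ‖V‖ := by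
    obtain ⟨Fre, Fim, hFre, hFim, hinner⟩ := hw w
    -- ‖w‖² = V Fre
    have hww : (‖w‖ : ℝ) ^ 2 = V Fre := by
      have h1 : (inner ℂ w w : ℂ) = ((‖w‖ : ℝ) : ℂ) ^ 2 := inner_self_eq_norm_sq_to_K w
      rw [h1] at hinner
      have := congrArg Complex.re hinner
      simpa [← Complex.ofReal_pow] using this
    -- a.e. bound on ‖f s''‖
    have hfb : ∀ᵐ s'' ∂(timeMeasure a b), ‖f s''‖ ≤ ‖f‖ := by
      have h := MeasureTheory.ae_le_eLpNormEssSup (f := ⇑f) (μ := timeMeasure a b)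
      filter_upwards [h] with s'' hs''
      have hnorm : ‖f‖ = (MeasureTheory.eLpNormEssSup (⇑f) (timeMeasure a b)).toReal := by
        rw [MeasureTheory.Lp.norm_def, MeasureTheory.eLpNorm_exponent_top]
      rw [hnorm]
      have hne : MeasureTheory.eLpNormEssSup (⇑f) (timeMeasure a b) ≠ ∞ := by
        rw [← MeasureTheory.eLpNorm_exponent_top]
        exact MeasureTheory.Lp.eLpNorm_ne_top f
      have := ENNReal.toReal_mono hne hs''
      simpa using this
    -- a.e. bound on ‖Fre s''‖
    have hFreb : ∀ᵐ s'' ∂(timeMeasure a b), ‖Fre s''‖ ≤ ‖w‖ * ‖f‖ := by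
      have hmem : ∀ᵐ s'' ∂(timeMeasure a b), s'' ∈ Set.Icc a b :=
        MeasureTheory.ae_restrict_mem measurableSet_Icc
      filter_upwards [hFre, hfb, hmem] with s'' hF hf' hm
      have heq : MeasureTheory.eLpNorm (⇑(Fre s'')) 1 volume
          = MeasureTheory.eLpNorm (fun x : Rd d =>
              ((starRingEnd ℂ) ((w : Rd d → ℂ) x)
                * ((U (s - s'') (f s'') : Ltwo d) : Rd d → ℂ) x).re) 1 volume := by
        refine MeasureTheory.eLpNorm_congr_ae (hF.trans ?_)
        filter_upwards with x
        simp [Set.indicator_of_mem hm]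
      have hb : MeasureTheory.eLpNorm (fun x : Rd d =>
            ((starRingEnd ℂ) ((w : Rd d → ℂ) x)
              * ((U (s - s'') (f s'') : Ltwo d) : Rd d → ℂ) x).re) 1 volume
          ≤ MeasureTheory.eLpNorm (⇑w) 2 volume
            * MeasureTheory.eLpNorm (⇑(U (s - s'') (f s'') : Ltwo d)) 2 volume := by
        refine MeasureTheory.eLpNorm_le_eLpNorm_mul_eLpNorm'_of_norm (p := 2) (q := 2) hwmeas
          (MeasureTheory.Lp.memLp _).aestronglyMeasurable
          (fun u v => ((starRingEnd ℂ) u * v).re) 1 ?_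
          (hpqr := ⟨by rw [inv_one]; exact ENNReal.inv_two_add_inv_two⟩) |>.trans_eq (by simp)
        filter_upwards with x
        rw [NNReal.coe_one, one_mul]
        calc ‖((starRingEnd ℂ) ((w : Rd d → ℂ) x)
              * ((U (s - s'') (f s'') : Ltwo d) : Rd d → ℂ) x).re‖
            ≤ ‖(starRingEnd ℂ) ((w : Rd d → ℂ) x)
              * ((U (s - s'') (f s'') : Ltwo d) : Rd d → ℂ) x‖ := by
              exact Complex.abs_re_le_norm _
          _ = ‖(w : Rd d → ℂ) x‖ * ‖((U (s - s'') (f s'') : Ltwo d) : Rd d → ℂ) x‖ := by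
              rw [norm_mul, RCLike.norm_conj]
      rw [MeasureTheory.Lp.norm_def, heq]
      refine ENNReal.toReal_le_of_le_ofReal (by positivity) (hb.trans ?_)
      rw [elpnorm_eq_ofReal_norm, elpnorm_eq_ofReal_norm,
        ← ENNReal.ofReal_mul (norm_nonneg _)]
      refine ENNReal.ofReal_le_ofReal ?_
      have : ‖(U (s - s'') (f s'') : Ltwo d)‖ = ‖f s''‖ := (U (s - s'')).norm_map _
      rw [this]
      exact mul_le_mul_of_nonneg_left hf' (norm_nonneg _)
    -- ‖Fre‖ bound
    have hFrenorm : ‖Fre‖ ≤ (b - a) ^ (1 - 1 / p.toReal) * (‖w‖ * ‖f‖) := by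
      have hle := MeasureTheory.eLpNorm_le_of_ae_bound (p := q) hFreb
      have hμ : (timeMeasure a b) Set.univ = ENNReal.ofReal (b - a) := by
        simp [timeMeasure, Real.volume_Icc]
      rw [hμ] at hle
      rw [MeasureTheory.Lp.norm_def]
      refine ENNReal.toReal_le_of_le_ofReal
        (mul_nonneg (Real.rpow_nonneg (by linarith) _) (by positivity)) (hle.trans ?_)
      rw [ENNReal.ofReal_rpow_of_nonneg (by linarith) (by positivity),
        ← ENNReal.ofReal_mul (Real.rpow_nonneg (by linarith) _), hexp]
    -- combine
    have hVF : V Fre ≤ ‖V‖ * ‖Fre‖ := le_trans (le_abs_self _) (V.le_opNorm Fre)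
    by_cases hw0 : ‖w‖ = 0
    · rw [hw0]
      exact mul_nonneg (mul_nonneg (Real.rpow_nonneg (by linarith) _)
        (norm_nonneg _)) (norm_nonneg _)
    · have hwpos : 0 < ‖w‖ := lt_of_le_of_ne (norm_nonneg _) (Ne.symm hw0)
      have key : ‖w‖ ^ 2 ≤ ‖V‖ * ((b - a) ^ (1 - 1 / p.toReal) * (‖w‖ * ‖f‖)) := by
        calc ‖w‖ ^ 2 = V Fre := hww
          _ ≤ ‖V‖ * ‖Fre‖ := hVF
          _ ≤ ‖V‖ * ((b - a) ^ (1 - 1 / p.toReal) * (‖w‖ * ‖f‖)) :=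
            mul_le_mul_of_nonneg_left hFrenorm (norm_nonneg _)
      nlinarith [hwpos]
  -- Step 3: combine everything
  refine step1.trans ?_
  have hGfin : MeasureTheory.eLpNorm G 2 volume ≠ ∞ := hg.2.ne
  calc MeasureTheory.eLpNorm G 2 volume * ENNReal.ofReal ‖w‖
      ≤ MeasureTheory.eLpNorm G 2 volume
        * ENNReal.ofReal ((b - a) ^ (1 - 1 / p.toReal) * ‖f‖ * ‖V‖) :=
        mul_le_mul_right (ENNReal.ofReal_le_ofReal hwnorm) _
    _ = ENNReal.ofReal ((MeasureTheory.eLpNorm G 2 volume).toReal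
        * ((b - a) ^ (1 - 1 / p.toReal) * ‖f‖ * ‖V‖)) := by
        rw [ENNReal.ofReal_mul ENNReal.toReal_nonneg, ENNReal.ofReal_toReal hGfin]
    _ ≤ ENNReal.ofReal ((b - a) ^ (1 - 1 / p.toReal)
        * (MeasureTheory.eLpNorm G 2 volume).toReal * ‖f‖ * ‖V‖) := by
        refine ENNReal.ofReal_le_ofReal (le_of_eq ?_)
        ring

end
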